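/- Running intersection via message passing (root independence): in a junction tree over a commutative semiring, the message along a directed edge u → v (defined recursively as the marginalization onto the shared attributes of u and v of the join of u's local relations with all incoming messages from u's neighbors other than v) depends only on the subtree rooted at u away from v, and in particular is identical regardless of which bag of the tree is chosen as the root or in which order other messages are computed. -/
import Mathlib


open Finset


open Finset

variable {Att : Type*} [Fintype Att] [DecidableEq Att]
variable {Val : Att → Type*} [∀ a, Fintype (Val a)] [∀ a, DecidableEq (Val a)]
variable {D : Type*} [CommSemiring D]

/-- `R` depends only on the attributes in schema `S`. -/
def DependsOnlyOn (R : (∀ a, Val a) → D) (S : Finset Att) : Prop :=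
  ∀ t₁ t₂ : ∀ a, Val a, (∀ a ∈ S, t₁ a = t₂ a) → R t₁ = R t₂

/-- Join of annotated relations: multiply the annotations. -/
def joinRel (R T : (∀ a, Val a) → D) : (∀ a, Val a) → D := fun t => R t * T t

/-- Marginalize out a single attribute `A`: sum over all values of `A`. -/
def marg (A : Att) (R : (∀ a, Val a) → D) : (∀ a, Val a) → D :=
  fun t => ∑ v : Val A, R (Function.update t A v)

/-- Marginalize out all attributes in `E`. -/
def margOver (E : Finset Att) (R : (∀ a, Val a) → D) : (∀ a, Val a) → D :=
  fun t => ∑ s : ∀ a, Val a, if ∀ a, a ∉ E → s a = t a then R s else 0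

variable {V : Type*} [Fintype V] [DecidableEq V]

/-- `w` lies in the subtree rooted at `u` away from `v`: there is a walk from
`w` to `u` that avoids `v`. -/
def InSubtree (G : SimpleGraph V) (u v w : V) : Prop :=
  ∃ p : G.Walk w u, v ∉ p.support

/-- The running intersection property: if an attribute belongs to two bags then
it belongs to every bag on the path between them. -/
def RunningIntersection (G : SimpleGraph V) (bag : V → Finset Att) : Prop :=
  ∀ (a : Att) (u v : V) (p : G.Walk u v), p.IsPath →
    a ∈ bag u → a ∈ bag v → ∀ w ∈ p.support, a ∈ bag w

/-- `M` is a message system for the junction tree `(G, bag)` with local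
relations `L`: the message `u → v` marginalizes, onto the attributes shared by
`u` and `v`, the join of `u`'s local relation with all incoming messages from
`u`'s neighbors other than `v`. -/
def MsgSystem (G : SimpleGraph V) [DecidableRel G.Adj] (bag : V → Finset Att)
    (L : V → (∀ a, Val a) → D) (M : V → V → (∀ a, Val a) → D) : Prop :=
  ∀ u v, G.Adj u v →
    M u v = margOver (bag u \ bag v)
      (fun t => L u t * ∏ w ∈ (G.neighborFinset u).erase v, M w u t)

/-- Absorption at a bag: join of its local relation with all incoming messages. -/
def absorb (G : SimpleGraph V) [DecidableRel G.Adj]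
    (L : V → (∀ a, Val a) → D) (M : V → V → (∀ a, Val a) → D) (v : V) :
    (∀ a, Val a) → D :=
  fun t => L v t * ∏ w ∈ G.neighborFinset v, M w v t


section Aux
omit [Fintype V] in
/-- In a tree, the subtree at a neighbor `w ≠ v` of `u` (away from `u`) is
contained in the subtree at `u` away from `v`. -/
lemma inSubtree_trans_aux (G : SimpleGraph V) (hG : G.IsTree) (u v w : V)
    (huv : G.Adj u v) (huw : G.Adj u w) (hwv : w ≠ v) :
    ∀ x, InSubtree G w u x → InSubtree G u v x := by
  rintro x ⟨p, hu⟩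
  have hvp : v ∉ p.support := by
    intro hv
    set q := (p.dropUntil v hv).bypass with hq
    have hqp : q.IsPath := SimpleGraph.Walk.bypass_isPath _
    have huq : u ∉ q.support := fun h => hu
      (SimpleGraph.Walk.support_dropUntil_subset p hv (SimpleGraph.Walk.support_bypass_subset _ h))
    set r : G.Walk v w :=
      SimpleGraph.Walk.cons huv.symm (SimpleGraph.Walk.cons huw SimpleGraph.Walk.nil) with hr
    have hrp : r.IsPath := by
      rw [hr]
      simp [SimpleGraph.Walk.cons_isPath_iff, huv.ne', huw.ne, hwv.symm]
    have := (hG.existsUnique_path v w).unique hqp hrp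
    rw [this] at huq
    simp [hr] at huq
  refine ⟨p.append (SimpleGraph.Walk.cons huw.symm SimpleGraph.Walk.nil), ?_⟩
  rw [SimpleGraph.Walk.support_append]
  simp [hvp, huv.ne']

end Aux

open Classical in
private lemma msg_aux (G : SimpleGraph V) [DecidableRel G.Adj]
    (hG : G.IsTree) (bag : V → Finset Att)
    (L₁ L₂ : V → (∀ a, Val a) → D)
    (M₁ M₂ : V → V → (∀ a, Val a) → D)
    (h₁ : MsgSystem G bag L₁ M₁) (h₂ : MsgSystem G bag L₂ M₂) :
    ∀ n (u v : V), G.Adj u v →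
      (Finset.univ.filter (fun w => InSubtree G u v w)).card ≤ n →
      (∀ w, InSubtree G u v w → L₁ w = L₂ w) → M₁ u v = M₂ u v := by
  intro n
  induction n with
  | zero =>
    intro u v huv hcard _
    exact absurd hcard (by
      simp only [Nat.le_zero, Finset.card_eq_zero, ← Finset.not_nonempty_iff_eq_empty]
      exact fun h => h ⟨u, Finset.mem_filter.2 ⟨Finset.mem_univ _,
        ⟨SimpleGraph.Walk.nil, by simp [huv.ne']⟩⟩⟩)
  | succ n ih =>
    intro u v huv hcard hloc
    have hu_mem : InSubtree G u v u := ⟨SimpleGraph.Walk.nil, by simp [huv.ne']⟩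
    rw [h₁ u v huv, h₂ u v huv]
    have hLu : L₁ u = L₂ u := hloc u hu_mem
    have key : (fun t => L₁ u t * ∏ w ∈ (G.neighborFinset u).erase v, M₁ w u t)
        = (fun t => L₂ u t * ∏ w ∈ (G.neighborFinset u).erase v, M₂ w u t) := by
      funext t
      rw [hLu]
      refine congrArg (L₂ u t * ·) (Finset.prod_congr rfl fun w hw => ?_)
      have hw' := Finset.mem_erase.1 hw
      have huw : G.Adj u w := (G.mem_neighborFinset u w).1 hw'.2
      have hsub : ∀ x, InSubtree G w u x → InSubtree G u v x :=
        inSubtree_trans_aux G hG u v w huv huw hw'.1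
      have hssub : (Finset.univ.filter (fun x => InSubtree G w u x)) ⊂
          (Finset.univ.filter (fun x => InSubtree G u v x)) := by
        refine Finset.ssubset_iff_of_subset (fun x hx => ?_) |>.2 ?_
        · exact Finset.mem_filter.2 ⟨Finset.mem_univ _, hsub x (Finset.mem_filter.1 hx).2⟩
        · refine ⟨u, Finset.mem_filter.2 ⟨Finset.mem_univ _, hu_mem⟩, ?_⟩
          simp only [Finset.mem_filter, Finset.mem_univ, true_and]
          rintro ⟨p, hp⟩
          exact hp p.start_mem_support
      have hcard' : (Finset.univ.filter (fun x => InSubtree G w u x)).card ≤ n :=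
        Nat.lt_succ_iff.1 (lt_of_lt_of_le (Finset.card_lt_card hssub) hcard)
      exact congrFun (ih w u huw.symm hcard' (fun x hx => hloc x (hsub x hx))) t
    rw [key]


/-- Root independence / subtree dependence of messages: in a junction tree, the
message along a directed edge `u → v` depends only on the local relations of
the subtree rooted at `u` away from `v`; in particular any two message systems
(computed with any roots and in any order) assign the same message to `u → v`
whenever their local relations agree on that subtree. -/
theorem message_root_independence (G : SimpleGraph V) [DecidableRel G.Adj]
    (hG : G.IsTree) (bag : V → Finset Att)
    (hRI : RunningIntersection G bag)
    (L₁ L₂ : V → (∀ a, Val a) → D)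
    (hL₁ : ∀ v, DependsOnlyOn (L₁ v) (bag v))
    (hL₂ : ∀ v, DependsOnlyOn (L₂ v) (bag v))
    (M₁ M₂ : V → V → (∀ a, Val a) → D)
    (h₁ : MsgSystem G bag L₁ M₁) (h₂ : MsgSystem G bag L₂ M₂)
    (u v : V) (huv : G.Adj u v)
    (hloc : ∀ w, InSubtree G u v w → L₁ w = L₂ w) :
    M₁ u v = M₂ u v := by
  classical
  exact msg_aux G hG bag L₁ L₂ M₁ M₂ h₁ h₂ _ u v huv le_rfl hloc
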